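/- Let n = diag(p^{-r}, p^{r−s}, p^{r}, p^{s−r})·w₀ where w₀ is the long Weyl element of Sp(4, Q_p), and let ψ, ψ' be characters of U(Q_p) trivial on U(Z_p). Then Kl_p(n, ψ, ψ') = Kl_p(n, ψ', ψ): the Sp(4) Kloosterman sum attached to the long Weyl element is symmetric in its two characters. -/
import Mathlib


open Matrix

variable (p : ℕ) [Fact p.Prime]

/-- The standard unipotent subgroup `U(ℚ_p)` of `Sp(4, ℚ_p)` (indices `Fin 2 ⊕ Fin 2`,
`inl` before `inr`): upper-triangular unipotent symplectic matrices. -/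
def InU (M : Matrix (Fin 2 ⊕ Fin 2) (Fin 2 ⊕ Fin 2) ℚ_[p]) : Prop :=
  M ∈ Matrix.symplecticGroup (Fin 2) ℚ_[p] ∧ (∀ i, M i i = 1) ∧
    ∀ i j : Fin 2 ⊕ Fin 2, Sum.Lex (· < ·) (· < ·) j i → M i j = 0

/-- `U(ℤ_p)`: elements of `U(ℚ_p)` with all entries of norm at most 1. -/
def InUZ (M : Matrix (Fin 2 ⊕ Fin 2) (Fin 2 ⊕ Fin 2) ℚ_[p]) : Prop :=
  InU p M ∧ ∀ i j, ‖M i j‖ ≤ 1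

/-- A character of `U(ℚ_p)` trivial on `U(ℤ_p)`. -/
def IsCharacterOfU (ψ : Matrix (Fin 2 ⊕ Fin 2) (Fin 2 ⊕ Fin 2) ℚ_[p] → ℂ) : Prop :=
  (∀ a b, InU p a → InU p b → ψ (a * b) = ψ a * ψ b) ∧ ∀ a, InUZ p a → ψ a = 1

/-- The representative `n_{w₀,r,s} = diag(p^{-r}, p^{r-s}, p^r, p^{s-r})·w₀` of the
long Weyl element of `Sp(4, ℚ_p)`. -/
noncomputable def nW0 (r s : ℤ) : Matrix (Fin 2 ⊕ Fin 2) (Fin 2 ⊕ Fin 2) ℚ_[p] :=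
  Matrix.fromBlocks 0 (Matrix.diagonal ![-(p : ℚ_[p]) ^ (-r), -(p : ℚ_[p]) ^ (r - s)])
    (Matrix.diagonal ![(p : ℚ_[p]) ^ r, (p : ℚ_[p]) ^ (s - r)]) 0

/-- The double-coset equivalence on `C(n)`: `x ∼ y` iff `y = γ·x·δ` with
`γ ∈ U(ℤ_p)` and `δ ∈ U_n(ℤ_p) = U(ℤ_p)` (for the long Weyl element `U_n = U`). -/
def KlRel (x y : Matrix (Fin 2 ⊕ Fin 2) (Fin 2 ⊕ Fin 2) ℚ_[p]) : Prop :=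
  ∃ γ δ, InUZ p γ ∧ InUZ p δ ∧ y = γ * x * δ

/-- Membership in `C(n) = U(ℚ_p)·n·U(ℚ_p) ∩ Sp(4, ℤ_p)`. -/
def InC (n x : Matrix (Fin 2 ⊕ Fin 2) (Fin 2 ⊕ Fin 2) ℚ_[p]) : Prop :=
  x ∈ Matrix.symplecticGroup (Fin 2) ℚ_[p] ∧ (∀ i j, ‖x i j‖ ≤ 1) ∧
    ∃ a b, InU p a ∧ InU p b ∧ x = a * n * b

namespace Stmt15Aux

open Matrix

variable (p : ℕ) [Fact p.Prime]

/-- The block-swap matrix implementing the involution. -/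
noncomputable def T4 : Matrix (Fin 2 ⊕ Fin 2) (Fin 2 ⊕ Fin 2) ℚ_[p] :=
  Matrix.fromBlocks 0 1 1 0

/-- The involution `ι(M) = T·Mᵀ·T`. -/
noncomputable def iota (M : Matrix (Fin 2 ⊕ Fin 2) (Fin 2 ⊕ Fin 2) ℚ_[p]) :
    Matrix (Fin 2 ⊕ Fin 2) (Fin 2 ⊕ Fin 2) ℚ_[p] :=
  T4 p * Mᵀ * T4 p

/-- Parametrization of the unipotent group. -/
noncomputable def Umat (S : Matrix (Fin 2) (Fin 2) ℚ_[p]) :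
    Matrix (Fin 2 ⊕ Fin 2) (Fin 2 ⊕ Fin 2) ℚ_[p] :=
  Matrix.fromBlocks 1 S 0 1

lemma T4_mul_T4 : T4 p * T4 p = 1 := by
  simp [T4, Matrix.fromBlocks_multiply, ← Matrix.fromBlocks_one]

lemma T4_transpose : (T4 p)ᵀ = T4 p := by
  simp [T4, Matrix.fromBlocks_transpose]

lemma iota_mul (A B : Matrix (Fin 2 ⊕ Fin 2) (Fin 2 ⊕ Fin 2) ℚ_[p]) :
    iota p (A * B) = iota p B * iota p A := by
  unfold iota
  have h : (T4 p * Bᵀ * T4 p) * (T4 p * Aᵀ * T4 p)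
      = T4 p * Bᵀ * ((T4 p * T4 p) * (Aᵀ * T4 p)) := by
    simp only [mul_assoc]
  rw [Matrix.transpose_mul, h, T4_mul_T4, one_mul]
  simp only [mul_assoc]

lemma iota_iota (M : Matrix (Fin 2 ⊕ Fin 2) (Fin 2 ⊕ Fin 2) ℚ_[p]) :
    iota p (iota p M) = M := by
  unfold iota
  have h1 : (T4 p * Mᵀ * T4 p)ᵀ = T4 p * M * T4 p := by
    rw [Matrix.transpose_mul, Matrix.transpose_mul, T4_transpose,
      Matrix.transpose_transpose]
    simp only [mul_assoc]
  have h2 : T4 p * (T4 p * M * T4 p) * T4 p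
      = (T4 p * T4 p) * M * (T4 p * T4 p) := by
    simp only [mul_assoc]
  rw [h1, h2, T4_mul_T4, one_mul, mul_one]

lemma Umat_mul (S S2 : Matrix (Fin 2) (Fin 2) ℚ_[p]) :
    Umat p S * Umat p S2 = Umat p (S + S2) := by
  simp only [Umat, Matrix.fromBlocks_multiply]
  simp [add_comm]

lemma iota_Umat {S : Matrix (Fin 2) (Fin 2) ℚ_[p]} (hS : Sᵀ = S) :
    iota p (Umat p S) = Umat p S := by
  simp only [iota, Umat, T4, Matrix.fromBlocks_transpose, Matrix.fromBlocks_multiply]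
  simp [hS]

lemma iota_nW0 (r s : ℤ) : iota p (nW0 p r s) = nW0 p r s := by
  simp only [iota, nW0, T4, Matrix.fromBlocks_transpose, Matrix.fromBlocks_multiply]
  simp

lemma inU_iff {M : Matrix (Fin 2 ⊕ Fin 2) (Fin 2 ⊕ Fin 2) ℚ_[p]} :
    InU p M ↔ ∃ S, Sᵀ = S ∧ M = Umat p S := by
  constructor
  · rintro ⟨hsp, hdiag, hlow⟩
    have hA10 : M (Sum.inl 1) (Sum.inl 0) = 0 := hlow _ _ (Sum.Lex.inl (by norm_num))
    have hD10 : M (Sum.inr 1) (Sum.inr 0) = 0 := hlow _ _ (Sum.Lex.inr (by norm_num))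
    have hM : M = Matrix.fromBlocks M.toBlocks₁₁ M.toBlocks₁₂ 0 M.toBlocks₂₂ := by
      have h0 : M.toBlocks₂₁ = 0 := by
        ext i j
        simp only [Matrix.toBlocks₂₁, Matrix.of_apply, Matrix.zero_apply]
        exact hlow _ _ (Sum.Lex.sep _ _)
      rw [← h0, Matrix.fromBlocks_toBlocks]
    have hsp' := SymplecticGroup.mem_iff.1 hsp
    rw [hM] at hsp'
    rw [show (Matrix.J (Fin 2) ℚ_[p]) = Matrix.fromBlocks 0 (-1) 1 0 from rfl] at hsp'
    rw [Matrix.fromBlocks_transpose, Matrix.fromBlocks_multiply,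
      Matrix.fromBlocks_multiply] at hsp'
    simp only [Matrix.mul_zero, Matrix.zero_mul, Matrix.mul_one, Matrix.one_mul,
      Matrix.mul_neg, Matrix.neg_mul, add_zero, zero_add, Matrix.transpose_zero,
      Matrix.transpose_one, neg_zero] at hsp'
    have h12 := congrArg Matrix.toBlocks₁₂ hsp'
    have h11 := congrArg Matrix.toBlocks₁₁ hsp'
    simp only [Matrix.toBlocks_fromBlocks₁₂, Matrix.toBlocks_fromBlocks₁₁] at h12 h11
    have hAD : M.toBlocks₁₁ * M.toBlocks₂₂ᵀ = 1 := neg_inj.mp h12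
    have ha : M (Sum.inl 0) (Sum.inl 1) = 0 := by
      have h3 := congrFun (congrFun hAD 0) 1
      simpa [Matrix.mul_apply, Fin.sum_univ_two, Matrix.toBlocks₁₁, Matrix.toBlocks₂₂,
        Matrix.one_apply, hdiag, hD10] using h3
    have hf : M (Sum.inr 0) (Sum.inr 1) = 0 := by
      have h3 := congrFun (congrFun hAD 1) 0
      simpa [Matrix.mul_apply, Fin.sum_univ_two, Matrix.toBlocks₁₁, Matrix.toBlocks₂₂,
        Matrix.one_apply, hdiag, hA10] using h3
    have hA1 : M.toBlocks₁₁ = 1 := by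
      ext i j; fin_cases i <;> fin_cases j <;>
        simp [Matrix.toBlocks₁₁, Matrix.one_apply, hdiag, hA10, ha]
    have hD1 : M.toBlocks₂₂ = 1 := by
      ext i j; fin_cases i <;> fin_cases j <;>
        simp [Matrix.toBlocks₂₂, Matrix.one_apply, hdiag, hD10, hf]
    rw [hA1] at h11
    simp only [Matrix.transpose_one, Matrix.mul_one, Matrix.one_mul] at h11
    have hB : M.toBlocks₁₂ᵀ = M.toBlocks₁₂ := (add_neg_eq_zero.mp h11).symm
    exact ⟨M.toBlocks₁₂, hB, by rw [hM, hA1, hD1]; rfl⟩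
  · rintro ⟨S, hS, rfl⟩
    refine ⟨?_, ?_, ?_⟩
    · rw [SymplecticGroup.mem_iff]
      rw [show (Matrix.J (Fin 2) ℚ_[p]) = Matrix.fromBlocks 0 (-1) 1 0 from rfl]
      simp only [Umat, Matrix.fromBlocks_transpose, Matrix.fromBlocks_multiply]
      simp [hS]
    · rintro (i | i) <;> simp [Umat]
    · intro i j hl
      cases hl with
      | inl h => simp [Umat, Matrix.one_apply_ne (ne_of_gt h)]
      | inr h => simp [Umat, Matrix.one_apply_ne (ne_of_gt h)]
      | sep a b => simp [Umat]

lemma iota_of_inU {M : Matrix (Fin 2 ⊕ Fin 2) (Fin 2 ⊕ Fin 2) ℚ_[p]} (h : InU p M) :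
    iota p M = M := by
  obtain ⟨S, hS, rfl⟩ := (inU_iff p).1 h
  exact iota_Umat p hS

lemma inU_mul {a b : Matrix (Fin 2 ⊕ Fin 2) (Fin 2 ⊕ Fin 2) ℚ_[p]}
    (ha : InU p a) (hb : InU p b) : InU p (a * b) := by
  obtain ⟨S, hS, rfl⟩ := (inU_iff p).1 ha
  obtain ⟨S2, hS2, rfl⟩ := (inU_iff p).1 hb
  rw [Umat_mul]
  exact (inU_iff p).2 ⟨S + S2, by rw [Matrix.transpose_add, hS, hS2], rfl⟩

lemma Umat_entry_norm {S : Matrix (Fin 2) (Fin 2) ℚ_[p]} (h : ∀ i j, ‖S i j‖ ≤ 1) :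
    ∀ i j, ‖Umat p S i j‖ ≤ 1 := by
  rintro (i | i) (j | j)
  · rcases eq_or_ne i j with rfl | hne
    · simp [Umat, Matrix.one_apply_eq]
    · simp [Umat, Matrix.one_apply_ne hne]
  · simpa [Umat] using h i j
  · simp [Umat]
  · rcases eq_or_ne i j with rfl | hne
    · simp [Umat, Matrix.one_apply_eq]
    · simp [Umat, Matrix.one_apply_ne hne]

lemma norm_of_Umat {S : Matrix (Fin 2) (Fin 2) ℚ_[p]} (h : ∀ i j, ‖Umat p S i j‖ ≤ 1) :
    ∀ i j, ‖S i j‖ ≤ 1 := fun i j => by simpa [Umat] using h (Sum.inl i) (Sum.inr j)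

lemma inUZ_mul {a b : Matrix (Fin 2 ⊕ Fin 2) (Fin 2 ⊕ Fin 2) ℚ_[p]}
    (ha : InUZ p a) (hb : InUZ p b) : InUZ p (a * b) := by
  obtain ⟨haU, han⟩ := ha
  obtain ⟨hbU, hbn⟩ := hb
  obtain ⟨S, hS, rfl⟩ := (inU_iff p).1 haU
  obtain ⟨S2, hS2, rfl⟩ := (inU_iff p).1 hbU
  refine ⟨inU_mul p haU hbU, ?_⟩
  rw [Umat_mul]
  refine Umat_entry_norm p (fun i j => ?_)
  have h1 := norm_of_Umat p han i j
  have h2 := norm_of_Umat p hbn i j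
  calc ‖(S + S2) i j‖ = ‖S i j + S2 i j‖ := by rw [Matrix.add_apply]
    _ ≤ max ‖S i j‖ ‖S2 i j‖ := Padic.nonarchimedean _ _
    _ ≤ 1 := max_le h1 h2

lemma T4_mul_apply (A : Matrix (Fin 2 ⊕ Fin 2) (Fin 2 ⊕ Fin 2) ℚ_[p])
    (i j : Fin 2 ⊕ Fin 2) : (T4 p * A) i j = A (Sum.swap i) j := by
  rcases i with i | i <;>
    simp [T4, Matrix.mul_apply, Fintype.sum_sum_type, Fin.sum_univ_two,
      Matrix.one_apply, Fin.forall_fin_two]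

lemma mul_T4_apply (A : Matrix (Fin 2 ⊕ Fin 2) (Fin 2 ⊕ Fin 2) ℚ_[p])
    (i j : Fin 2 ⊕ Fin 2) : (A * T4 p) i j = A i (Sum.swap j) := by
  rcases j with j | j <;>
    simp [T4, Matrix.mul_apply, Fintype.sum_sum_type, Fin.sum_univ_two,
      Matrix.one_apply, Fin.forall_fin_two]

lemma iota_apply (M : Matrix (Fin 2 ⊕ Fin 2) (Fin 2 ⊕ Fin 2) ℚ_[p]) (i j : Fin 2 ⊕ Fin 2) :
    iota p M i j = M (Sum.swap j) (Sum.swap i) := by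
  unfold iota
  rw [mul_T4_apply, T4_mul_apply, Matrix.transpose_apply]

lemma T4_J_T4 : T4 p * Matrix.J (Fin 2) ℚ_[p] * T4 p = -Matrix.J (Fin 2) ℚ_[p] := by
  simp only [T4, Matrix.J, Matrix.fromBlocks_multiply, Matrix.fromBlocks_neg]
  simp

lemma iota_transpose (M : Matrix (Fin 2 ⊕ Fin 2) (Fin 2 ⊕ Fin 2) ℚ_[p]) :
    (iota p M)ᵀ = T4 p * M * T4 p := by
  unfold iota
  rw [Matrix.transpose_mul, Matrix.transpose_mul, T4_transpose, Matrix.transpose_transpose]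
  simp only [mul_assoc]

lemma iota_sp {M : Matrix (Fin 2 ⊕ Fin 2) (Fin 2 ⊕ Fin 2) ℚ_[p]}
    (h : M ∈ Matrix.symplecticGroup (Fin 2) ℚ_[p]) :
    iota p M ∈ Matrix.symplecticGroup (Fin 2) ℚ_[p] := by
  rw [SymplecticGroup.mem_iff]
  have hM : Mᵀ * Matrix.J (Fin 2) ℚ_[p] * M = Matrix.J (Fin 2) ℚ_[p] :=
    SymplecticGroup.mem_iff'.1 h
  rw [iota_transpose]
  have key : iota p M * Matrix.J (Fin 2) ℚ_[p] * (T4 p * M * T4 p)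
      = T4 p * (Mᵀ * (T4 p * Matrix.J (Fin 2) ℚ_[p] * T4 p) * M) * T4 p := by
    unfold iota
    simp only [mul_assoc]
  rw [key, T4_J_T4]
  have h2 : Mᵀ * -Matrix.J (Fin 2) ℚ_[p] * M = -Matrix.J (Fin 2) ℚ_[p] := by
    rw [Matrix.mul_neg, Matrix.neg_mul, hM]
  rw [h2, Matrix.mul_neg, Matrix.neg_mul, T4_J_T4, neg_neg]

lemma inC_iota (r s : ℤ) {x : Matrix (Fin 2 ⊕ Fin 2) (Fin 2 ⊕ Fin 2) ℚ_[p]}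
    (h : InC p (nW0 p r s) x) : InC p (nW0 p r s) (iota p x) := by
  obtain ⟨hsp, hnorm, a, b, ha, hb, rfl⟩ := h
  refine ⟨iota_sp p hsp, ?_, b, a, hb, ha, ?_⟩
  · intro i j; rw [iota_apply]; exact hnorm _ _
  · rw [iota_mul, iota_mul, iota_nW0, iota_of_inU p ha, iota_of_inU p hb, Matrix.mul_assoc]

lemma klrel_iota {x y : Matrix (Fin 2 ⊕ Fin 2) (Fin 2 ⊕ Fin 2) ℚ_[p]}
    (h : KlRel p x y) : KlRel p (iota p x) (iota p y) := by
  obtain ⟨γ, δ, hγ, hδ, rfl⟩ := h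
  refine ⟨δ, γ, hδ, hγ, ?_⟩
  rw [iota_mul, iota_mul, iota_of_inU p hγ.1, iota_of_inU p hδ.1, Matrix.mul_assoc]

lemma klrel_trans {x y z : Matrix (Fin 2 ⊕ Fin 2) (Fin 2 ⊕ Fin 2) ℚ_[p]}
    (h1 : KlRel p x y) (h2 : KlRel p y z) : KlRel p x z := by
  obtain ⟨γ, δ, hγ, hδ, rfl⟩ := h1
  obtain ⟨γ2, δ2, hγ2, hδ2, rfl⟩ := h2
  exact ⟨γ2 * γ, δ * δ2, inUZ_mul p hγ2 hγ, inUZ_mul p hδ hδ2, by noncomm_ring⟩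

lemma bruhat_unique (r s : ℤ) {S1 S2 S3 S4 : Matrix (Fin 2) (Fin 2) ℚ_[p]}
    (h : Umat p S1 * nW0 p r s * Umat p S2 = Umat p S3 * nW0 p r s * Umat p S4) :
    S1 = S3 ∧ S2 = S4 := by
  have hp : (p : ℚ_[p]) ≠ 0 :=
    Nat.cast_ne_zero.mpr (Fact.out : p.Prime).ne_zero
  have hd : ∀ i : Fin 2, ![(p : ℚ_[p]) ^ r, (p : ℚ_[p]) ^ (s - r)] i ≠ 0 := by
    intro i; fin_cases i <;> simpa using zpow_ne_zero _ hp
  have hprod : ∀ X Y : Matrix (Fin 2) (Fin 2) ℚ_[p],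
      Umat p X * nW0 p r s * Umat p Y =
        Matrix.fromBlocks
          (X * Matrix.diagonal ![(p : ℚ_[p]) ^ r, (p : ℚ_[p]) ^ (s - r)])
          (X * Matrix.diagonal ![(p : ℚ_[p]) ^ r, (p : ℚ_[p]) ^ (s - r)] * Y +
            Matrix.diagonal ![-(p : ℚ_[p]) ^ (-r), -(p : ℚ_[p]) ^ (r - s)])
          (Matrix.diagonal ![(p : ℚ_[p]) ^ r, (p : ℚ_[p]) ^ (s - r)])
          (Matrix.diagonal ![(p : ℚ_[p]) ^ r, (p : ℚ_[p]) ^ (s - r)] * Y) := by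
    intro X Y
    simp only [Umat, nW0, Matrix.fromBlocks_multiply]
    simp [add_comm]
  rw [hprod, hprod] at h
  have h11 := congrArg Matrix.toBlocks₁₁ h
  have h22 := congrArg Matrix.toBlocks₂₂ h
  simp only [Matrix.toBlocks_fromBlocks₁₁, Matrix.toBlocks_fromBlocks₂₂] at h11 h22
  constructor
  · ext i j
    have h3 := congrFun (congrFun h11 i) j
    rw [Matrix.mul_diagonal, Matrix.mul_diagonal] at h3
    exact mul_right_cancel₀ (hd j) h3
  · ext i j
    have h3 := congrFun (congrFun h22 i) j
    rw [Matrix.diagonal_mul, Matrix.diagonal_mul] at h3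
    exact mul_left_cancel₀ (hd i) h3

end Stmt15Aux

/-- Symmetry of the Sp(4) Kloosterman sum attached to the long Weyl element:
`Kl_p(n, ψ, ψ') = Kl_p(n, ψ', ψ)`. The sum over `X(n)` is realized by a finite set `R`
of representatives of `U(ℤ_p)\C(n)/U(ℤ_p)`, with Bruhat decomposition data `u, u'`. -/
theorem stmt_15 (r s : ℤ)
    (R : Finset (Matrix (Fin 2 ⊕ Fin 2) (Fin 2 ⊕ Fin 2) ℚ_[p]))
    (u u' : Matrix (Fin 2 ⊕ Fin 2) (Fin 2 ⊕ Fin 2) ℚ_[p] →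
      Matrix (Fin 2 ⊕ Fin 2) (Fin 2 ⊕ Fin 2) ℚ_[p])
    (hmem : ∀ x ∈ R, InC p (nW0 p r s) x)
    (hdec : ∀ x ∈ R, InU p (u x) ∧ InU p (u' x) ∧ x = u x * nW0 p r s * u' x)
    (hcover : ∀ x, InC p (nW0 p r s) x → ∃ y ∈ R, KlRel p x y)
    (hsep : ∀ x ∈ R, ∀ y ∈ R, KlRel p x y → x = y)
    (ψ ψ' : Matrix (Fin 2 ⊕ Fin 2) (Fin 2 ⊕ Fin 2) ℚ_[p] → ℂ)
    (hψ : IsCharacterOfU p ψ) (hψ' : IsCharacterOfU p ψ') :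
    (∑ x ∈ R, ψ (u x) * ψ' (u' x)) = ∑ x ∈ R, ψ' (u x) * ψ (u' x) := by
  classical
  open Stmt15Aux in
  have key : ∀ x, ∃ y, x ∈ R → y ∈ R ∧ KlRel p (iota p x) y := by
    intro x
    by_cases hx : x ∈ R
    · obtain ⟨y, hy, hk⟩ := hcover _ (inC_iota p r s (hmem x hx))
      exact ⟨y, fun _ => ⟨hy, hk⟩⟩
    · exact ⟨x, fun h => absurd h hx⟩
  choose g hgspec using key
  have hgR : ∀ x ∈ R, g x ∈ R := fun x hx => (hgspec x hx).1
  have hgK : ∀ x ∈ R, KlRel p (iota p x) (g x) := fun x hx => (hgspec x hx).2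
  have hinv : ∀ x ∈ R, g (g x) = x := by
    intro x hx
    have h1 : KlRel p x (iota p (g x)) := by
      have := klrel_iota p (hgK x hx)
      rwa [iota_iota] at this
    have h2 : KlRel p x (g (g x)) := klrel_trans p h1 (hgK _ (hgR x hx))
    exact (hsep x hx _ (hgR _ (hgR x hx)) h2).symm
  refine Finset.sum_nbij' g g hgR hgR hinv hinv ?_
  intro x hx
  obtain ⟨γ, δ, hγ, hδ, hrel⟩ := hgK x hx
  obtain ⟨hux, hux', hxdec⟩ := hdec x hx
  obtain ⟨hugx, hugx', hgxdec⟩ := hdec _ (hgR x hx)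
  -- Bruhat coordinates
  obtain ⟨Sγ, hSγ, hγeq⟩ := (inU_iff p).1 hγ.1
  obtain ⟨Sδ, hSδ, hδeq⟩ := (inU_iff p).1 hδ.1
  obtain ⟨Sa, hSa, haeq⟩ := (inU_iff p).1 hux
  obtain ⟨Sb, hSb, hbeq⟩ := (inU_iff p).1 hux'
  obtain ⟨Sc, hSc, hceq⟩ := (inU_iff p).1 hugx
  obtain ⟨Sd, hSd, hdeq⟩ := (inU_iff p).1 hugx'
  have hiota : iota p x = u' x * nW0 p r s * u x := by
    have e1 : iota p (u x * nW0 p r s * u' x)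
        = iota p (u' x) * (iota p (nW0 p r s) * iota p (u x)) := by
      rw [iota_mul, iota_mul]
    conv_lhs => rw [hxdec]
    rw [e1, iota_nW0, iota_of_inU p hux, iota_of_inU p hux', mul_assoc]
  have hgx2 : Umat p (Sγ + Sb) * nW0 p r s * Umat p (Sa + Sδ)
      = Umat p Sc * nW0 p r s * Umat p Sd := by
    rw [← Umat_mul, ← Umat_mul, ← hγeq, ← hδeq, ← haeq, ← hbeq, ← hceq, ← hdeq]
    rw [← hgxdec, hrel, hiota]
    noncomm_ring
  obtain ⟨e1, e2⟩ := bruhat_unique p r s hgx2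
  have hu1 : u (g x) = γ * u' x := by
    rw [hceq, ← e1, ← Umat_mul, ← hγeq, ← hbeq]
  have hu2 : u' (g x) = u x * δ := by
    rw [hdeq, ← e2, ← Umat_mul, ← haeq, ← hδeq]
  rw [hu1, hu2, hψ'.1 γ (u' x) hγ.1 hux', hψ.1 (u x) δ hux hδ.1,
    hψ'.2 γ hγ, hψ.2 δ hδ]
  ring
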